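/- Let M and N be positroids on [n] with rk(M) = rk(N) − 1, with decorated permutations σ and π and Grassmann necklaces I^σ and I^π respectively. Then I^σ_i ⊆ I^π_i for all i ∈ [n] if and only if there exists A ⊆ [n] such that σ = ρ_A(π). -/

import Mathlib

open Finset

attribute [local instance] Classical.propDecidable

noncomputable section

/-- A matroid on `Fin n`, presented by its collection of bases (basis exchange axiom). -/
structure FinMatroid (n : ℕ) where
  bases : Finset (Finset (Fin n))
  bases_nonempty : bases.Nonempty
  exchange : ∀ B₁ ∈ bases, ∀ B₂ ∈ bases, ∀ x ∈ B₁ \ B₂,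
      ∃ y ∈ B₂ \ B₁, insert y (B₁.erase x) ∈ bases

/-- Rank function associated to a collection of bases: `rk S = max |S ∩ B|`. -/
def rkOf {n : ℕ} (Bs : Finset (Finset (Fin n))) (S : Finset (Fin n)) : ℕ :=
  Bs.sup fun B => (S ∩ B).card

/-- Rank function of a matroid. -/
def rk {n : ℕ} (M : FinMatroid n) (S : Finset (Fin n)) : ℕ := rkOf M.bases S

/-- Independence w.r.t. a collection of bases. -/
def Indep {n : ℕ} (Bs : Finset (Finset (Fin n))) (S : Finset (Fin n)) : Prop :=
  ∃ B ∈ Bs, S ⊆ B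

/-- A circuit: a dependent set all of whose proper subsets are independent. -/
def IsCircuit {n : ℕ} (Bs : Finset (Finset (Fin n))) (C : Finset (Fin n)) : Prop :=
  ¬ Indep Bs C ∧ ∀ D ⊆ C, D ≠ C → Indep Bs D

/-- `M` is a quotient of `N`: every circuit of `N` is a union of circuits of `M`. -/
def IsQuotient {n : ℕ} (BsM BsN : Finset (Finset (Fin n))) : Prop :=
  ∀ C, IsCircuit BsN C → ∃ 𝒟 : Finset (Finset (Fin n)),
    (∀ D ∈ 𝒟, IsCircuit BsM D) ∧ C = 𝒟.sup id

/-- The values of a finset under the key `f`, sorted increasingly. -/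
def sortedVals {n : ℕ} (f : Fin n → ℕ) (A : Finset (Fin n)) : List ℕ :=
  (A.image f).sort (· ≤ ·)

/-- Gale order (w.r.t. the total order on `Fin n` given by an injective key `f`):
`A ≤ B` iff the `i`-th smallest element of `A` is `≤` the `i`-th smallest element of `B`. -/
def galeLE {n : ℕ} (f : Fin n → ℕ) (A B : Finset (Fin n)) : Prop :=
  List.Forall₂ (· ≤ ·) (sortedVals f A) (sortedVals f B)

/-- Position of `a` in the cyclic order starting at `i` (so `cpos i i = 0`). -/
def cpos {n : ℕ} (i a : Fin n) : ℕ := ((a - i : Fin n) : ℕ)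

/-- Cyclic half-open interval `(a, b]`; in particular `(a, a] = ∅`. -/
def cycIoc {n : ℕ} (a b : Fin n) : Finset (Fin n) :=
  Finset.univ.filter fun x => cpos a x ≠ 0 ∧ cpos a x ≤ cpos a b

/-- Cyclic closed interval `[a, b]`. -/
def cycIcc {n : ℕ} (a b : Fin n) : Finset (Fin n) :=
  Finset.univ.filter fun x => cpos a x ≤ cpos a b

/-- A decorated permutation: a permutation together with a coloring in `{0, ±1}`
whose zero set is exactly the set of non-fixed points. -/
structure DecoratedPerm (n : ℕ) where
  perm : Equiv.Perm (Fin n)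
  col : Fin n → ℤ
  col_range : ∀ i, col i = 0 ∨ col i = 1 ∨ col i = -1
  col_zero_iff : ∀ i, col i = 0 ↔ perm i ≠ i

/-- Grassmann necklace term `I_i = {a : a <_i π⁻¹(a) or col a = -1}`. -/
def neck {n : ℕ} (π : DecoratedPerm n) (i : Fin n) : Finset (Fin n) :=
  Finset.univ.filter fun a => cpos i a < cpos i (π.perm.symm a) ∨ π.col a = -1

/-- Grassmann conecklace term `J_i = π⁻¹(I_i)`. -/
def coneck {n : ℕ} (π : DecoratedPerm n) (i : Fin n) : Finset (Fin n) :=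
  (neck π i).image π.perm.symm

/-- Rank of a decorated permutation: the common size of its necklace terms. -/
def drank {n : ℕ} (π : DecoratedPerm n) : ℕ :=
  if h : 0 < n then (neck π ⟨0, h⟩).card else 0

/-- Grassmann interval `S^π_i = (π⁻¹(i), i]`, with the coloop convention `[n]`
(the loop convention `∅` is automatic since `(i, i] = ∅`). -/
def SInt {n : ℕ} (π : DecoratedPerm n) (i : Fin n) : Finset (Fin n) :=
  if π.col i = -1 then Finset.univ else cycIoc (π.perm.symm i) i

/-- Shift interval `S^{π,σ}_i = (π⁻¹(i), σ⁻¹(i)]`, with the convention `[n]` when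
`i` is a loop of `π` and a coloop of `σ`. -/
def shiftInt {n : ℕ} (π σ : DecoratedPerm n) (i : Fin n) : Finset (Fin n) :=
  if π.col i = 1 ∧ σ.col i = -1 then Finset.univ
  else cycIoc (π.perm.symm i) (σ.perm.symm i)

/-- CW-arrow starting at `i`: the cyclic interval from `i` to `π(i)` (all of `[n]` for coloops). -/
def cwArrow {n : ℕ} (π : DecoratedPerm n) (i : Fin n) : Finset (Fin n) :=
  if π.col i = -1 then Finset.univ
  else Finset.univ.filter fun j => cpos i j ≤ cpos i (π.perm i)

/-- The CW-function: the number of CW-arrows contained in `A` (for `A ≠ [n]`),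
and `n - rk(M)` for `A = [n]`. -/
def cw {n : ℕ} (π : DecoratedPerm n) (A : Finset (Fin n)) : ℕ :=
  if A = Finset.univ then n - drank π
  else (Finset.univ.filter fun i => cwArrow π i ⊆ A).card

/-- Bases of the positroid associated with a decorated permutation: sets that are
above every necklace term in the corresponding cyclic Gale order. -/
def positroidBases {n : ℕ} (π : DecoratedPerm n) : Finset (Finset (Fin n)) :=
  Finset.univ.filter fun B => ∀ i, galeLE (cpos i) (neck π i) B

/-- `σ` is the cyclic shift `ρ_A(π)`: positions in `A` are frozen; at a position
`i ∉ A` the new value is `π(j)` where `j` is the maximum of `Aᶜ` in the cyclic order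
starting at `i`; new fixed points are decorated as loops. -/
def IsCyclicShift {n : ℕ} (π σ : DecoratedPerm n) (A : Finset (Fin n)) : Prop :=
  (∀ i ∈ A, σ.perm i = π.perm i ∧ σ.col i = π.col i) ∧
  (∀ i ∉ A, ∃ j, j ∉ A ∧ (∀ j', j' ∉ A → cpos i j' ≤ cpos i j) ∧ σ.perm i = π.perm j) ∧
  (∀ i ∉ A, σ.col i = if σ.perm i = i then 1 else 0)

/-- The shift intervals `S^{π,σ}_i` partition `[n]`. -/
def ShiftPartition {n : ℕ} (π σ : DecoratedPerm n) : Prop :=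
  (∀ i j : Fin n, i ≠ j → Disjoint (shiftInt π σ i) (shiftInt π σ j)) ∧
  Finset.univ.biUnion (shiftInt π σ) = Finset.univ

/-- `C` is a cyclic component of `A`: a maximal cyclic interval contained in `A`. -/
def IsCycComponent {n : ℕ} [NeZero n] (A C : Finset (Fin n)) : Prop :=
  ∃ a b : Fin n, C = cycIcc a b ∧ C ⊆ A ∧ (a - 1) ∉ A ∧ (b + 1) ∉ A

/-- Bases of the lattice path matroid `M[U, L]`. -/
def lpmBases {n : ℕ} (U L : Finset (Fin n)) : Finset (Finset (Fin n)) :=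
  Finset.univ.filter fun B => galeLE Fin.val U B ∧ galeLE Fin.val B L
end
section Core
variable {n : ℕ}

theorem cpos_eq (i a : Fin n) :
    cpos i a = if i.val ≤ a.val then a.val - i.val else a.val + n - i.val := by
  have hi := i.isLt; have ha := a.isLt
  have h1 : cpos i a = (n - i.val + a.val) % n := by
    show ((a - i : Fin n) : ℕ) = _
    rw [Fin.sub_def]
  rw [h1]
  rcases le_or_gt i.val a.val with h | h
  · have h2 : n - i.val + a.val = (a.val - i.val) + n := by omega
    rw [h2, Nat.add_mod_right, Nat.mod_eq_of_lt (by omega), if_pos h]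
  · rw [Nat.mod_eq_of_lt (by omega), if_neg (by omega)]
    omega

theorem cpos_self (i : Fin n) : cpos i i = 0 := by
  rw [cpos_eq, if_pos (le_refl i.val)]; omega

theorem cpos_lt (i a : Fin n) : cpos i a < n := by
  have hi := i.isLt; have ha := a.isLt
  rw [cpos_eq]; split <;> omega

theorem cpos_eq_zero {i a : Fin n} : cpos i a = 0 ↔ a = i := by
  have hi := i.isLt; have ha := a.isLt
  rw [cpos_eq, Fin.ext_iff]; split <;> omega

theorem cpos_left_inj {i a b : Fin n} : cpos i a = cpos i b ↔ a = b := by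
  have hi := i.isLt; have ha := a.isLt; have hb := b.isLt
  rw [cpos_eq, cpos_eq, Fin.ext_iff]; split <;> split <;> omega

theorem cpos_right_inj {a b i : Fin n} : cpos a i = cpos b i ↔ a = b := by
  have hi := i.isLt; have ha := a.isLt; have hb := b.isLt
  rw [cpos_eq, cpos_eq, Fin.ext_iff]; split <;> split <;> omega

theorem cpos_comp {a b c : Fin n} :
    cpos a c = cpos a b + cpos b c ∨ cpos a c + n = cpos a b + cpos b c := by
  have ha := a.isLt; have hb := b.isLt; have hc := c.isLt
  rw [cpos_eq, cpos_eq, cpos_eq]; split_ifs <;> omega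

theorem fin_ne_val {a b : Fin n} (h : a ≠ b) : a.val ≠ b.val :=
  fun hh => h (Fin.ext hh)

theorem cpos_anti {a b : Fin n} (h : a ≠ b) : cpos a b + cpos b a = n := by
  have ha := a.isLt; have hb := b.isLt
  have h' := fin_ne_val h
  rw [cpos_eq, cpos_eq]; split_ifs <;> omega

end Core
section Ioc
variable {n : ℕ}

theorem mem_cycIoc {a b x : Fin n} :
    x ∈ cycIoc a b ↔ cpos a x ≠ 0 ∧ cpos a x ≤ cpos a b := by
  simp [cycIoc]

theorem mem_cycIoc' {a b x : Fin n} :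
    x ∈ cycIoc a b ↔ cpos x b < cpos a b := by
  rw [mem_cycIoc]
  have ha := a.isLt; have hb := b.isLt; have hx := x.isLt
  rw [cpos_eq, cpos_eq, cpos_eq]; split_ifs <;> omega

theorem add_cpos_mod (a x : Fin n) : (a.val + cpos a x) % n = x.val := by
  have hx := x.isLt
  rw [cpos_eq]; split_ifs with h
  · have h2 : a.val + (x.val - a.val) = x.val := by omega
    rw [h2, Nat.mod_eq_of_lt hx]
  · have h2 : a.val + (x.val + n - a.val) = x.val + n := by omega
    rw [h2, Nat.add_mod_right, Nat.mod_eq_of_lt hx]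

theorem cpos_add_mk (a : Fin n) {m : ℕ} (h : m < n) :
    cpos a (⟨(a.val + m) % n, Nat.mod_lt _ a.pos⟩ : Fin n) = m := by
  have ha := a.isLt
  rw [cpos_eq]
  simp only [Fin.val_mk]
  rcases lt_or_ge (a.val + m) n with h2 | h2
  · rw [Nat.mod_eq_of_lt h2]
    split <;> omega
  · have h3 : (a.val + m) % n = a.val + m - n := by
      rw [Nat.mod_eq_sub_mod h2, Nat.mod_eq_of_lt (by omega)]
    rw [h3]
    split <;> omega

theorem card_cycIoc (a b : Fin n) : (cycIoc a b).card = cpos a b := by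
  rw [← Finset.card_range (cpos a b)]
  apply Finset.card_bij' (fun x _ => cpos a x - 1)
    (fun t _ => (⟨(a.val + (t + 1)) % n, Nat.mod_lt _ a.pos⟩ : Fin n))
  · intro x hx
    rw [mem_cycIoc] at hx
    rw [Finset.mem_range]; omega
  · intro t ht
    rw [Finset.mem_range] at ht
    have hbn := cpos_lt a b
    rw [mem_cycIoc, cpos_add_mk a (by omega)]
    omega
  · intro x hx
    rw [mem_cycIoc] at hx
    have h1 : cpos a x - 1 + 1 = cpos a x := by omega
    apply Fin.ext
    simp only [h1]
    exact add_cpos_mod a x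
  · intro t ht
    rw [Finset.mem_range] at ht
    have hbn := cpos_lt a b
    rw [cpos_add_mk a (by omega)]
    omega

theorem cycIoc_subset_same {x y b : Fin n} :
    cycIoc x b ⊆ cycIoc y b ↔ cpos x b ≤ cpos y b := by
  constructor
  · intro h
    by_contra hc
    have h1 : y ∈ cycIoc x b := by rw [mem_cycIoc']; omega
    have h2 := h h1
    rw [mem_cycIoc'] at h2; omega
  · intro h z hz
    rw [mem_cycIoc'] at *
    omega

theorem cpos_sub_of_le {j x a : Fin n} (h : cpos x a ≤ cpos j a) :
    cpos j x = cpos j a - cpos x a := by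
  have ha := a.isLt; have hj := j.isLt; have hx := x.isLt
  simp only [cpos_eq] at *; split_ifs at * <;> omega

theorem cpos_sub_of_gt {j x a : Fin n} (h : cpos j a < cpos x a) :
    cpos j x = cpos j a + n - cpos x a := by
  have ha := a.isLt; have hj := j.isLt; have hx := x.isLt
  simp only [cpos_eq] at *; split_ifs at * <;> omega

end Ioc
section SIntSec
variable {n : ℕ} (π : DecoratedPerm n)

theorem col_fixed {a : Fin n} (h : π.col a ≠ 0) : π.perm a = a := by
  by_contra hc
  exact h ((π.col_zero_iff a).2 hc)

theorem col_fixed_symm {a : Fin n} (h : π.col a ≠ 0) : π.perm.symm a = a := by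
  have := col_fixed π h
  conv_lhs => rw [← this]
  exact π.perm.symm_apply_apply a

theorem col_of_not_fixed {a : Fin n} (h : π.perm a ≠ a) : π.col a = 0 :=
  (π.col_zero_iff a).2 h

theorem symm_ne {a : Fin n} : π.perm.symm a = a ↔ π.perm a = a := by
  constructor
  · intro h; conv_lhs => rw [← h]
    exact π.perm.apply_symm_apply a
  · intro h; conv_lhs => rw [← h]
    exact π.perm.symm_apply_apply a

theorem cpos_lt_iff {i a b : Fin n} : cpos i a < cpos i b ↔ cpos i a < cpos b a := by
  have ha := a.isLt; have hb := b.isLt; have hi := i.isLt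
  simp only [cpos_eq]; split_ifs <;> omega

/-- Lemma A : necklace membership via the Grassmann interval. -/
theorem mem_neck_iff {i a : Fin n} : a ∈ neck π i ↔ i ∈ SInt π a := by
  rw [neck, Finset.mem_filter, SInt]
  by_cases hc : π.col a = -1
  · simp [hc]
  · simp only [hc, if_false, Finset.mem_univ, true_and]
    rw [or_false, mem_cycIoc']
    exact cpos_lt_iff

theorem card_SInt (a : Fin n) :
    (SInt π a).card = if π.col a = -1 then n else cpos (π.perm.symm a) a := by
  rw [SInt]; split
  · simp
  · exact card_cycIoc _ _

theorem SInt_eq_univ_iff {a : Fin n} :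
    SInt π a = Finset.univ ↔ π.col a = -1 := by
  constructor
  · intro h
    by_contra hc
    have h1 := card_SInt π a
    rw [h, if_neg hc] at h1
    simp only [Finset.card_univ, Fintype.card_fin] at h1
    have := cpos_lt (π.perm.symm a) a
    omega
  · intro h; rw [SInt, if_pos h]

theorem neck_eq_filter (i : Fin n) :
    neck π i = Finset.univ.filter fun a => i ∈ SInt π a := by
  ext a
  rw [Finset.mem_filter, mem_neck_iff]
  simp

theorem sum_card_SInt :
    ∑ a : Fin n, (SInt π a).card = ∑ i : Fin n, (neck π i).card := by
  have h1 : ∀ i : Fin n, (neck π i).card = ∑ a : Fin n, if i ∈ SInt π a then 1 else 0 := by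
    intro i
    rw [neck_eq_filter]
    rw [Finset.card_filter]
  have h2 : ∀ a : Fin n, (SInt π a).card = ∑ i : Fin n, if i ∈ SInt π a then 1 else 0 := by
    intro a
    rw [← Finset.card_filter]
    congr 1
    ext i; simp
  simp only [h1, h2]
  exact Finset.sum_comm

end SIntSec
section ConstSec
variable {n : ℕ} [NeZero n] (π : DecoratedPerm n)

theorem val_succ (i : Fin n) : (i + 1 : Fin n).val = if i.val + 1 = n then 0 else i.val + 1 := by
  have hi := i.isLt
  rw [Fin.add_def, Fin.val_one']
  simp only [Fin.val_mk]
  by_cases h1 : n = 1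
  · subst h1
    have h0 : i.val = 0 := by omega
    rw [h0]; norm_num
  · have hn1 : 1 % n = 1 := Nat.mod_eq_of_lt (by omega)
    rw [hn1]
    by_cases h2 : i.val + 1 = n
    · rw [h2, Nat.mod_self, if_pos rfl]
    · rw [Nat.mod_eq_of_lt (by omega), if_neg h2]

theorem cpos_succ {i a : Fin n} (h : a ≠ i) : cpos (i + 1) a + 1 = cpos i a := by
  have hi := i.isLt; have ha := a.isLt; have h' := fin_ne_val h
  have hs := val_succ i
  simp only [cpos_eq, hs]
  split_ifs <;> omega

theorem cpos_succ_self (i : Fin n) : cpos (i + 1) i = n - 1 := by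
  have hi := i.isLt
  have hs := val_succ i
  simp only [cpos_eq, hs]
  split_ifs <;> omega

theorem succ_mem_SInt {i a : Fin n} (h1 : a ≠ i) (h2 : π.perm.symm a ≠ i) :
    i + 1 ∈ SInt π a ↔ i ∈ SInt π a := by
  rw [SInt]; split
  · simp
  · rw [mem_cycIoc', mem_cycIoc']
    have h3 := cpos_succ h1
    have h4 : cpos (π.perm.symm a) a ≠ cpos i a := fun hh => h2 (cpos_right_inj.1 hh)
    omega

theorem card_neck_succ (i : Fin n) : (neck π (i + 1)).card = (neck π i).card := by
  by_cases hp : π.perm i = i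
  · have heq : neck π (i + 1) = neck π i := by
      ext a
      rw [mem_neck_iff, mem_neck_iff]
      by_cases hai : a = i
      · subst hai
        rw [SInt]
        split
        · simp
        · have hsa : π.perm.symm a = a := by rw [symm_ne]; exact hp
          rw [mem_cycIoc', mem_cycIoc', hsa, cpos_self]
          omega
      · exact succ_mem_SInt π hai (fun hh => hai (by rw [← hp, ← hh, π.perm.apply_symm_apply]))
    rw [heq]
  · have hn2 : 2 ≤ n := by
      by_contra hc
      have h1 := i.isLt; have h2 := (π.perm i).isLt
      exact hp (Fin.ext (by omega))
    have hcoli : π.col i = 0 := col_of_not_fixed π hp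
    have hsymi : π.perm.symm i ≠ i := fun hh => hp ((symm_ne π).1 hh)
    have hpi : π.perm i ≠ i := hp
    have hsympi : π.perm.symm (π.perm i) = i := π.perm.symm_apply_apply i
    have hcolpi : π.col (π.perm i) ≠ -1 := by
      intro hh
      have := col_fixed_symm π (a := π.perm i) (by rw [hh]; decide)
      rw [hsympi] at this
      exact hp this.symm
    have hcoli' : π.col i ≠ -1 := by rw [hcoli]; decide
    have m1 : i ∈ neck π i := by
      rw [mem_neck_iff, SInt, if_neg hcoli', mem_cycIoc', cpos_self]
      have : cpos (π.perm.symm i) i ≠ 0 := fun hh => hsymi (cpos_eq_zero.1 hh).symm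
      omega
    have m2 : i ∉ neck π (i + 1) := by
      rw [mem_neck_iff, SInt, if_neg hcoli', mem_cycIoc', cpos_succ_self]
      have := cpos_lt (π.perm.symm i) i
      omega
    have m3 : π.perm i ∉ neck π i := by
      rw [mem_neck_iff, SInt, if_neg hcolpi, hsympi, mem_cycIoc']
      omega
    have m4 : π.perm i ∈ neck π (i + 1) := by
      rw [mem_neck_iff, SInt, if_neg hcolpi, hsympi, mem_cycIoc']
      have := cpos_succ hpi
      omega
    have key : neck π (i + 1) = insert (π.perm i) ((neck π i).erase i) := by
      ext a
      rw [Finset.mem_insert, Finset.mem_erase]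
      by_cases hai : a = i
      · subst hai
        simp only [m2, false_iff]
        exact fun h => h.elim (fun hh => hpi hh.symm) (fun hh => hh.1 rfl)
      · by_cases hapi : a = π.perm i
        · subst hapi
          exact iff_of_true m4 (Or.inl rfl)
        · rw [mem_neck_iff π, mem_neck_iff π] at *
          rw [succ_mem_SInt π hai (fun hh => hapi (by rw [← hh, π.perm.apply_symm_apply]))]
          simp [hai, hapi]
    have hni : π.perm i ∉ (neck π i).erase i := fun h => m3 (Finset.mem_of_mem_erase h)
    rw [key, Finset.card_insert_of_notMem hni, Finset.card_erase_of_mem m1]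
    have : 0 < (neck π i).card := Finset.card_pos.2 ⟨i, m1⟩
    omega

open Fin.NatCast in
theorem card_neck_eq_drank (i : Fin n) : (neck π i).card = drank π := by
  have hn : 0 < n := i.pos
  rw [drank, dif_pos hn]
  have H : ∀ m : ℕ, (neck π ((⟨0, hn⟩ : Fin n) + (m : Fin n))).card = (neck π ⟨0, hn⟩).card := by
    intro m
    induction m with
    | zero => simp
    | succ k ih =>
      have h1 : ((k + 1 : ℕ) : Fin n) = (k : Fin n) + 1 := by push_cast; ring
      rw [h1, ← add_assoc, card_neck_succ]
      exact ih
  have h2 := H i.val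
  have h3 : (⟨0, hn⟩ : Fin n) + (i.val : Fin n) = i := by
    apply Fin.ext
    rw [Fin.add_def, Fin.val_natCast]
    simp [Nat.mod_eq_of_lt i.isLt]
  rw [h3] at h2
  exact h2

theorem sum_card_SInt_eq : ∑ a : Fin n, ((SInt π a).card : ℤ) = n * drank π := by
  have h1 : ∑ a : Fin n, ((SInt π a).card : ℤ) = ∑ i : Fin n, ((neck π i).card : ℤ) := by
    exact_mod_cast congrArg (fun k : ℕ => (k : ℤ)) (sum_card_SInt π)
  rw [h1]
  rw [Finset.sum_congr rfl (fun i _ => by rw [card_neck_eq_drank π i])]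
  rw [Finset.sum_const, Finset.card_univ, Fintype.card_fin, nsmul_eq_mul]

end ConstSec
section GapSec
variable {n : ℕ}

/-- three-point arithmetic: inside two nearest-gaps is impossible -/
theorem gap_disj_arith {j j' y : Fin n} (hjj' : j ≠ j')
    (h1 : cpos j y ≠ 0) (h2 : cpos j y ≤ cpos j j')
    (h3 : cpos j' y ≠ 0) (h4 : cpos j' y ≤ cpos j' j) : False := by
  have ha := j.isLt; have hb := j'.isLt; have hc := y.isLt
  have h5 := fin_ne_val hjj'
  simp only [cpos_eq] at *
  split_ifs at * <;> omega

theorem between_arith {j i z : Fin n} (hij : i ≠ j)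
    (h : cpos i j < cpos i z) : cpos j z ≠ 0 ∧ cpos j z < cpos j i := by
  have ha := j.isLt; have hb := i.isLt; have hc := z.isLt
  have h5 := fin_ne_val hij
  simp only [cpos_eq] at *
  split_ifs at * <;> omega

theorem between_arith2 {j z y : Fin n} (hz : cpos j z ≠ 0) (h : cpos j z < cpos j y) :
    cpos z y ≠ 0 ∧ cpos z y < cpos j y := by
  have ha := j.isLt; have hb := z.isLt; have hc := y.isLt
  simp only [cpos_eq] at *
  split_ifs at * <;> omega

theorem between_arith' {j i z : Fin n} (hij : i ≠ j)
    (hz : cpos j z ≠ 0) (h : cpos j z < cpos j i) : cpos i j < cpos i z := by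
  have ha := j.isLt; have hb := i.isLt; have hc := z.isLt
  have h5 := fin_ne_val hij
  simp only [cpos_eq] at *
  split_ifs at * <;> omega

/-- if `f j` is the nearest element of `T` after `j`, then `j` is `cpos f j`-maximal. -/
theorem min_to_max {T : Finset (Fin n)} {j i : Fin n} (hij : i ≠ j)
    (hmin : ∀ z ∈ T.erase j, cpos j i ≤ cpos j z) :
    ∀ z ∈ T, cpos i z ≤ cpos i j := by
  intro z hz
  by_contra hc
  push_neg at hc
  obtain ⟨hz0, hzlt⟩ := between_arith hij hc
  have hzj : z ≠ j := fun hh => hz0 (by rw [hh, cpos_self])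
  have := hmin z (Finset.mem_erase.2 ⟨hzj, hz⟩)
  omega

theorem max_to_min {T : Finset (Fin n)} {j i : Fin n} (hij : i ≠ j)
    (hmax : ∀ z ∈ T, cpos i z ≤ cpos i j) :
    ∀ z ∈ T.erase j, cpos j i ≤ cpos j z := by
  intro z hz
  rw [Finset.mem_erase] at hz
  by_contra hc
  push_neg at hc
  have hz0 : cpos j z ≠ 0 := fun hh => hz.1 (cpos_eq_zero.1 hh)
  have := between_arith' hij hz0 hc
  have := hmax z hz.2
  omega

theorem gapsum {T : Finset (Fin n)} {f : Fin n → Fin n} (hne : T.Nonempty)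
    (hf : ∀ j ∈ T, f j ∈ T.erase j)
    (hmin : ∀ j ∈ T, ∀ z ∈ T.erase j, cpos j (f j) ≤ cpos j z) :
    ∑ j ∈ T, cpos j (f j) = n := by
  have hdisj : ∀ x ∈ T, ∀ y ∈ T, x ≠ y →
      Disjoint (cycIoc x (f x)) (cycIoc y (f y)) := by
    intro x hx y hy hxy
    rw [Finset.disjoint_left]
    intro z hzx hzy
    rw [mem_cycIoc] at hzx hzy
    have hx' := hf x hx
    have hy' := hf y hy
    rw [Finset.mem_erase] at hx' hy'
    have h2 : cpos x z ≤ cpos x y := le_trans hzx.2 (hmin x hx y (Finset.mem_erase.2 ⟨hxy.symm, hy⟩))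
    have h4 : cpos y z ≤ cpos y x := le_trans hzy.2 (hmin y hy x (Finset.mem_erase.2 ⟨hxy, hx⟩))
    exact gap_disj_arith hxy hzx.1 h2 hzy.1 h4
  have hcover : T.biUnion (fun j => cycIoc j (f j)) = Finset.univ := by
    apply Finset.eq_univ_of_forall
    intro y
    rw [Finset.mem_biUnion]
    have hne' : (T.erase y).Nonempty := by
      obtain ⟨j0, hj0⟩ := hne
      have hf0 := hf j0 hj0
      rw [Finset.mem_erase] at hf0
      rcases eq_or_ne j0 y with h | h
      · exact ⟨f j0, Finset.mem_erase.2 ⟨by rw [← h]; exact hf0.1, hf0.2⟩⟩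
      · exact ⟨j0, Finset.mem_erase.2 ⟨h, hj0⟩⟩
    obtain ⟨j, hjmem, hjmin⟩ := Finset.exists_min_image (T.erase y) (fun j => cpos j y) hne'
    rw [Finset.mem_erase] at hjmem
    refine ⟨j, hjmem.2, ?_⟩
    rw [mem_cycIoc]
    have hjy : cpos j y ≠ 0 := fun hh => hjmem.1 ((cpos_eq_zero.1 hh).symm ▸ rfl)
    refine ⟨hjy, ?_⟩
    by_contra hc
    push_neg at hc
    have hz := hf j hjmem.2
    rw [Finset.mem_erase] at hz
    have h1 : cpos j (f j) ≠ 0 := fun hh => hz.1 (cpos_eq_zero.1 hh)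
    obtain ⟨h2, h3⟩ := between_arith2 h1 hc
    have hzy : f j ≠ y := fun hh => h2 (by rw [hh, cpos_self])
    have := hjmin (f j) (Finset.mem_erase.2 ⟨hzy, hz.2⟩)
    omega
  calc ∑ j ∈ T, cpos j (f j) = ∑ j ∈ T, (cycIoc j (f j)).card := by
        exact Finset.sum_congr rfl (fun j _ => (card_cycIoc j (f j)).symm)
    _ = (T.biUnion (fun j => cycIoc j (f j))).card := (Finset.card_biUnion hdisj).symm
    _ = (Finset.univ : Finset (Fin n)).card := by rw [hcover]
    _ = n := by rw [Finset.card_univ, Fintype.card_fin]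

end GapSec
section AgreeSec
variable {n : ℕ}

theorem col_eq_one (π : DecoratedPerm n) {j : Fin n} (hfix : π.perm j = j)
    (hne : π.col j ≠ -1) : π.col j = 1 := by
  rcases π.col_range j with h | h | h
  · exact absurd hfix ((π.col_zero_iff j).1 h)
  · exact h
  · exact absurd h hne

theorem card_SInt_le (π : DecoratedPerm n) (a : Fin n) : (SInt π a).card ≤ n := by
  have := Finset.card_le_univ (SInt π a)
  rwa [Fintype.card_fin] at this

theorem agree_iff (σ π : DecoratedPerm n) (j : Fin n) :
    (σ.perm j = π.perm j ∧ σ.col j = π.col j) ↔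
      SInt σ (π.perm j) = SInt π (π.perm j) := by
  have hn : 0 < n := j.pos
  have hsymm : π.perm.symm (π.perm j) = j := π.perm.symm_apply_apply j
  constructor
  · rintro ⟨hperm, hcol⟩
    by_cases hcb : π.col (π.perm j) = -1
    · have hfix : π.perm (π.perm j) = π.perm j := col_fixed π (by rw [hcb]; decide)
      have hbj : π.perm j = j := π.perm.injective hfix
      rw [SInt, SInt, if_pos hcb, if_pos (by rw [hbj] at hcb ⊢; rw [hcol]; exact hcb)]
    · have hσcb : σ.col (π.perm j) ≠ -1 := by
        intro hh
        have hfixσ : σ.perm (π.perm j) = π.perm j := col_fixed σ (by rw [hh]; decide)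
        have hpj : π.perm j = j := σ.perm.injective (by rw [hfixσ, hperm])
        rw [hpj] at hcb hh
        have : π.col j = 1 := col_eq_one π hpj hcb
        rw [hcol, this] at hh
        exact absurd hh (by decide)
      rw [SInt, SInt, if_neg hcb, if_neg hσcb, hsymm]
      congr 1
      rw [← hperm, σ.perm.symm_apply_apply]
  · intro heq
    by_cases hcb : π.col (π.perm j) = -1
    · have hfix : π.perm (π.perm j) = π.perm j := col_fixed π (by rw [hcb]; decide)
      have hbj : π.perm j = j := π.perm.injective hfix
      rw [hbj] at heq hcb
      have hπu : SInt π j = Finset.univ := by rw [SInt, if_pos hcb]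
      have hσ : σ.col j = -1 := (SInt_eq_univ_iff σ).1 (heq.trans hπu)
      refine ⟨?_, by rw [hσ, hcb]⟩
      rw [hbj]
      exact col_fixed σ (by rw [hσ]; decide)
    · have hππ : SInt π (π.perm j) = cycIoc j (π.perm j) := by
        rw [SInt, if_neg hcb, hsymm]
      have hσcb : σ.col (π.perm j) ≠ -1 := by
        intro hh
        have h1 : SInt σ (π.perm j) = Finset.univ := by rw [SInt, if_pos hh]
        rw [h1, hππ] at heq
        have hcard := congrArg Finset.card heq
        rw [card_cycIoc, Finset.card_univ, Fintype.card_fin] at hcard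
        have := cpos_lt j (π.perm j)
        omega
      have hσσ : SInt σ (π.perm j) =
          cycIoc (σ.perm.symm (π.perm j)) (π.perm j) := by rw [SInt, if_neg hσcb]
      rw [hσσ, hππ] at heq
      have hcard := congrArg Finset.card heq
      rw [card_cycIoc, card_cycIoc] at hcard
      have hs'm : σ.perm.symm (π.perm j) = j := cpos_right_inj.1 hcard
      have hperm : σ.perm j = π.perm j := by
        conv_lhs => rw [← hs'm]
        exact σ.perm.apply_symm_apply _
      refine ⟨hperm, ?_⟩
      by_cases hfix : π.perm j = j
      · have hπ1 : π.col j = 1 := col_eq_one π hfix (by rwa [hfix] at hcb)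
        have hσ1 : σ.col j = 1 :=
          col_eq_one σ (by rw [hperm, hfix]) (by rw [← hfix]; exact hσcb)
        rw [hπ1, hσ1]
      · have h1 : σ.col j = 0 := col_of_not_fixed σ (by rw [hperm]; exact hfix)
        have h2 : π.col j = 0 := col_of_not_fixed π hfix
        rw [h1, h2]

end AgreeSec
section FwdSec
variable {n : ℕ}

theorem forward_dir (hn : 0 < n) (σ π : DecoratedPerm n)
    (hkey : ∑ a : Fin n, (((SInt π a).card : ℤ) - ((SInt σ a).card : ℤ)) = (n : ℤ))
    (hsub : ∀ a, SInt σ a ⊆ SInt π a) :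
    ∃ A : Finset (Fin n), IsCyclicShift π σ A := by
  classical
  have hδ0 : ∀ a : Fin n, (0:ℤ) ≤ ((SInt π a).card : ℤ) - ((SInt σ a).card : ℤ) :=
    fun a => sub_nonneg.2 (by exact_mod_cast Finset.card_le_card (hsub a))
  by_cases hbig : ∃ a0 : Fin n, ((SInt π a0).card : ℤ) - ((SInt σ a0).card : ℤ) = (n:ℤ)
  · -- degenerate case : one coloop of π becomes a loop of σ, A = [n] \ {a0}
    obtain ⟨a0, ha0⟩ := hbig
    have hπle := card_SInt_le π a0
    have hσle := card_SInt_le σ a0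
    have hπn : (SInt π a0).card = n := by omega
    have hσ0 : (SInt σ a0).card = 0 := by omega
    have hπu : SInt π a0 = Finset.univ :=
      Finset.eq_univ_of_card _ (by rw [hπn, Fintype.card_fin])
    have hπcol : π.col a0 = -1 := (SInt_eq_univ_iff π).1 hπu
    have hπfix : π.perm a0 = a0 := col_fixed π (by rw [hπcol]; decide)
    have hσcol : σ.col a0 ≠ -1 := by
      intro hh
      have hu : SInt σ a0 = Finset.univ := by rw [SInt, if_pos hh]
      rw [hu, Finset.card_univ, Fintype.card_fin] at hσ0
      omega
    have hσio : SInt σ a0 = cycIoc (σ.perm.symm a0) a0 := by rw [SInt, if_neg hσcol]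
    have hcp : cpos (σ.perm.symm a0) a0 = 0 := by rw [← card_cycIoc, ← hσio]; exact hσ0
    have hσsym : σ.perm.symm a0 = a0 := (cpos_eq_zero.1 hcp).symm
    have hσfix : σ.perm a0 = a0 := (symm_ne σ).1 hσsym
    have hσ1 : σ.col a0 = 1 := col_eq_one σ hσfix hσcol
    have hrest : ∀ a : Fin n, a ≠ a0 → SInt σ a = SInt π a := by
      intro a ha
      have hsplit := Finset.add_sum_erase Finset.univ
        (fun b => ((SInt π b).card : ℤ) - ((SInt σ b).card : ℤ)) (Finset.mem_univ a0)
      rw [hkey] at hsplit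
      have hz : ∑ b ∈ Finset.univ.erase a0,
          (((SInt π b).card : ℤ) - ((SInt σ b).card : ℤ)) = 0 := by omega
      have hzero := (Finset.sum_eq_zero_iff_of_nonneg (fun b _ => hδ0 b)).1 hz a
        (Finset.mem_erase.2 ⟨ha, Finset.mem_univ a⟩)
      have hcard : (SInt π a).card ≤ (SInt σ a).card := by omega
      exact Finset.eq_of_subset_of_card_le (hsub a) hcard
    refine ⟨Finset.univ.erase a0, ?_, ?_, ?_⟩
    · intro i hi
      have hia0 : i ≠ a0 := (Finset.mem_erase.1 hi).1
      have hpia0 : π.perm i ≠ a0 := by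
        intro hh
        exact hia0 (π.perm.injective (by rw [hh, hπfix]))
      exact (agree_iff σ π i).2 (hrest (π.perm i) hpia0)
    · intro i hi
      have hia0 : i = a0 := by
        by_contra hc
        exact hi (Finset.mem_erase.2 ⟨hc, Finset.mem_univ i⟩)
      subst hia0
      refine ⟨i, Finset.notMem_erase i Finset.univ, ?_, by rw [hσfix, hπfix]⟩
      intro j' hj'
      have hji : j' = i := by
        by_contra hc
        exact hj' (Finset.mem_erase.2 ⟨hc, Finset.mem_univ j'⟩)
      rw [hji]
    · intro i hi
      have hia0 : i = a0 := by
        by_contra hc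
        exact hi (Finset.mem_erase.2 ⟨hc, Finset.mem_univ i⟩)
      subst hia0
      rw [if_pos hσfix]
      exact hσ1
  · -- main case
    push_neg at hbig
    set A : Finset (Fin n) := Finset.univ.filter
        (fun j => SInt σ (π.perm j) = SInt π (π.perm j)) with hAdef
    have hmemA : ∀ j : Fin n, j ∈ A ↔ SInt σ (π.perm j) = SInt π (π.perm j) := by
      intro j; rw [hAdef, Finset.mem_filter]; simp
    have hagree : ∀ j ∈ A, σ.perm j = π.perm j ∧ σ.col j = π.col j :=
      fun j hj => (agree_iff σ π j).2 ((hmemA j).1 hj)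
    set T : Finset (Fin n) := Finset.univ.filter (fun j => j ∉ A) with hTdef
    have hmemT : ∀ j : Fin n, j ∈ T ↔ j ∉ A := by
      intro j; rw [hTdef, Finset.mem_filter]; simp
    have hδA0 : ∀ j : Fin n, j ∈ A →
        ((SInt π (π.perm j)).card : ℤ) - ((SInt σ (π.perm j)).card : ℤ) = 0 :=
      fun j hj => by rw [(hmemA j).1 hj]; ring
    have hδTpos : ∀ j : Fin n, j ∉ A →
        (0:ℤ) < ((SInt π (π.perm j)).card : ℤ) - ((SInt σ (π.perm j)).card : ℤ) := by
      intro j hj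
      rcases lt_or_eq_of_le (hδ0 (π.perm j)) with h | h
      · exact h
      · exfalso
        apply hj
        rw [hmemA]
        have hcard : (SInt π (π.perm j)).card ≤ (SInt σ (π.perm j)).card := by omega
        exact Finset.eq_of_subset_of_card_le (hsub _) hcard
    set x : Fin n → Fin n := fun j => σ.perm.symm (π.perm j) with hxdef
    have hx_s : ∀ j, σ.perm (x j) = π.perm j := fun j => σ.perm.apply_symm_apply _
    have hxinj : Function.Injective x :=
      fun a b hab => π.perm.injective (σ.perm.symm.injective hab)
    have hxT : ∀ j, j ∉ A → x j ∉ A := by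
      intro j hj hxA
      have h1 := (hagree (x j) hxA).1
      rw [hx_s j] at h1
      have hxjj : x j = j := π.perm.injective h1.symm
      rw [hxjj] at hxA
      exact hj hxA
    have hδx : ∀ j : Fin n, j ∉ A → x j ≠ j ∧
        ((SInt π (π.perm j)).card : ℤ) - ((SInt σ (π.perm j)).card : ℤ) = cpos j (x j) := by
      intro j hj
      have hδpos := hδTpos j hj
      have hδlt : ((SInt π (π.perm j)).card : ℤ) - ((SInt σ (π.perm j)).card : ℤ) < n := by
        have h1 := card_SInt_le π (π.perm j)
        have h2 : (0:ℤ) ≤ ((SInt σ (π.perm j)).card : ℤ) := by positivity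
        rcases lt_or_eq_of_le (show ((SInt π (π.perm j)).card : ℤ) -
            ((SInt σ (π.perm j)).card : ℤ) ≤ n by omega) with h | h
        · exact h
        · exact absurd h (hbig (π.perm j))
      have hσcb : σ.col (π.perm j) ≠ -1 := by
        intro hh
        have h1 : SInt σ (π.perm j) = Finset.univ := by rw [SInt, if_pos hh]
        have h2 : SInt π (π.perm j) = Finset.univ :=
          Finset.univ_subset_iff.1 (by rw [← h1]; exact hsub (π.perm j))
        rw [h1, h2] at hδpos
        simp at hδpos
      have hσio : SInt σ (π.perm j) = cycIoc (x j) (π.perm j) := by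
        rw [SInt, if_neg hσcb]
      have hc2 : (SInt σ (π.perm j)).card = cpos (x j) (π.perm j) := by
        rw [hσio, card_cycIoc]
      by_cases hcb : π.col (π.perm j) = -1
      · have hfixπ : π.perm (π.perm j) = π.perm j := col_fixed π (by rw [hcb]; decide)
        have hpjj : π.perm j = j := π.perm.injective hfixπ
        have hπu : SInt π (π.perm j) = Finset.univ := by rw [SInt, if_pos hcb]
        have hc1 : (SInt π (π.perm j)).card = n := by
          rw [hπu, Finset.card_univ, Fintype.card_fin]
        have hcp2 : cpos (x j) (π.perm j) = cpos (x j) j := by rw [hpjj]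
        have hxne : x j ≠ j := by
          intro hh
          have h0 : cpos (x j) (π.perm j) = 0 := by rw [hh, hpjj, cpos_self]
          omega
        have hanti := cpos_anti (Ne.symm hxne)
        refine ⟨hxne, ?_⟩
        omega
      · have hππ : SInt π (π.perm j) = cycIoc j (π.perm j) := by
          rw [SInt, if_neg hcb, π.perm.symm_apply_apply]
        have hc1 : (SInt π (π.perm j)).card = cpos j (π.perm j) := by
          rw [hππ, card_cycIoc]
        have hss : cycIoc (x j) (π.perm j) ⊆ cycIoc j (π.perm j) := by
          rw [← hσio, ← hππ]; exact hsub _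
        have hle : cpos (x j) (π.perm j) ≤ cpos j (π.perm j) := cycIoc_subset_same.1 hss
        have hxne : x j ≠ j := by
          intro hh
          rw [hh] at hc2
          omega
        have hsubeq := cpos_sub_of_le hle
        refine ⟨hxne, ?_⟩
        omega
    have hTne : T.Nonempty := by
      rw [Finset.nonempty_iff_ne_empty]
      intro hTe
      have hall : ∀ j : Fin n, j ∈ A := by
        intro j; by_contra hc
        have hjj : j ∈ T := (hmemT j).2 hc
        rw [hTe] at hjj
        exact absurd hjj (Finset.notMem_empty j)
      have h0 : ∑ a : Fin n, (((SInt π a).card:ℤ) - ((SInt σ a).card:ℤ)) = 0 := by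
        rw [← Equiv.sum_comp π.perm
          (fun a => ((SInt π a).card:ℤ) - ((SInt σ a).card:ℤ))]
        exact Finset.sum_eq_zero (fun j _ => hδA0 j (hall j))
      rw [h0] at hkey
      omega
    have hsumT : ∑ j ∈ T, (cpos j (x j) : ℤ) = (n:ℤ) := by
      have h1 : ∑ j ∈ T, (cpos j (x j):ℤ) =
          ∑ j ∈ T, (((SInt π (π.perm j)).card:ℤ) - ((SInt σ (π.perm j)).card:ℤ)) :=
        Finset.sum_congr rfl (fun j hj => ((hδx j ((hmemT j).1 hj)).2).symm)
      rw [h1, Finset.sum_subset (Finset.subset_univ T) (fun j _ hj =>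
        hδA0 j (by by_contra hc; exact hj ((hmemT j).2 hc)))]
      rw [Equiv.sum_comp π.perm
        (fun a => ((SInt π a).card:ℤ) - ((SInt σ a).card:ℤ))]
      exact hkey
    have hxErase : ∀ j ∈ T, x j ∈ T.erase j := fun j hj =>
      Finset.mem_erase.2 ⟨(hδx j ((hmemT j).1 hj)).1,
        (hmemT _).2 (hxT j ((hmemT j).1 hj))⟩
    have Hmin : ∀ j : Fin n, ∃ y : Fin n,
        j ∈ T → (y ∈ T.erase j ∧ ∀ z ∈ T.erase j, cpos j y ≤ cpos j z) := by
      intro j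
      by_cases hj : j ∈ T
      · obtain ⟨y, hy1, hy2⟩ := Finset.exists_min_image (T.erase j)
          (fun z => cpos j z) ⟨x j, hxErase j hj⟩
        exact ⟨y, fun _ => ⟨hy1, hy2⟩⟩
      · exact ⟨j, fun h => absurd h hj⟩
    choose nxt hnxt using Hmin
    have hgap : ∑ j ∈ T, cpos j (nxt j) = n :=
      gapsum hTne (fun j hj => (hnxt j hj).1) (fun j hj => (hnxt j hj).2)
    have hptle : ∀ j ∈ T, cpos j (nxt j) ≤ cpos j (x j) :=
      fun j hj => (hnxt j hj).2 (x j) (hxErase j hj)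
    have hsumT' : ∑ j ∈ T, cpos j (x j) = n := by exact_mod_cast hsumT
    have hpteq : ∀ j ∈ T, cpos j (x j) = cpos j (nxt j) := by
      by_contra hc
      push_neg at hc
      obtain ⟨j0, hj0, hne⟩ := hc
      have hstrict : ∑ j ∈ T, cpos j (nxt j) < ∑ j ∈ T, cpos j (x j) :=
        Finset.sum_lt_sum hptle ⟨j0, hj0,
          lt_of_le_of_ne (hptle j0 hj0) (fun h => hne h.symm)⟩
      omega
    have hxmin : ∀ j ∈ T, ∀ z ∈ T.erase j, cpos j (x j) ≤ cpos j z := by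
      intro j hj z hz
      rw [hpteq j hj]
      exact (hnxt j hj).2 z hz
    have himg : T.image x = T := by
      apply Finset.eq_of_subset_of_card_le
      · intro y hy
        obtain ⟨j, hj, rfl⟩ := Finset.mem_image.1 hy
        exact (hmemT _).2 (hxT j ((hmemT j).1 hj))
      · rw [Finset.card_image_of_injective _ hxinj]
    refine ⟨A, fun j hj => hagree j hj, ?_, ?_⟩
    · intro i hi
      have hiT : i ∈ T := (hmemT i).2 hi
      have hiimg : i ∈ T.image x := by rw [himg]; exact hiT
      obtain ⟨j, hjT, hxj⟩ := Finset.mem_image.1 hiimg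
      refine ⟨j, (hmemT j).1 hjT, ?_, ?_⟩
      · intro j' hj'
        have hj'T : j' ∈ T := (hmemT j').2 hj'
        have hxne : x j ≠ j := (hδx j ((hmemT j).1 hjT)).1
        have hmax := min_to_max hxne (hxmin j hjT)
        rw [hxj] at hmax
        exact hmax j' hj'T
      · rw [← hxj]; exact hx_s j
    · intro i hi
      by_cases hfix : σ.perm i = i
      · rw [if_pos hfix]
        apply col_eq_one σ hfix
        intro hh
        have h1 : SInt σ i = Finset.univ := by rw [SInt, if_pos hh]
        have h2 : SInt π i = Finset.univ :=
          Finset.univ_subset_iff.1 (by rw [← h1]; exact hsub i)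
        have hπcol : π.col i = -1 := (SInt_eq_univ_iff π).1 h2
        have hπfix : π.perm i = i := col_fixed π (by rw [hπcol]; decide)
        apply hi
        rw [hmemA, hπfix, h1, h2]
      · rw [if_neg hfix]
        exact col_of_not_fixed σ hfix

end FwdSec
section BwdSec
variable {n : ℕ}

theorem inj_arith {i i' j : Fin n} (hii' : i ≠ i') (hji : j ≠ i) (hji' : j ≠ i')
    (ha : cpos i i' ≤ cpos i j) (hb : cpos i' i ≤ cpos i' j) : False := by
  have h1 := i.isLt; have h2 := i'.isLt; have h3 := j.isLt
  have e1 := fin_ne_val hii'; have e2 := fin_ne_val hji; have e3 := fin_ne_val hji'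
  simp only [cpos_eq] at *
  split_ifs at * <;> omega

theorem backward_dir (hn : 0 < n) (σ π : DecoratedPerm n)
    (hkey : ∑ a : Fin n, (((SInt π a).card : ℤ) - ((SInt σ a).card : ℤ)) = (n : ℤ))
    (A : Finset (Fin n))
    (h1 : ∀ i ∈ A, σ.perm i = π.perm i ∧ σ.col i = π.col i)
    (h2 : ∀ i ∉ A, ∃ j, j ∉ A ∧ (∀ j', j' ∉ A → cpos i j' ≤ cpos i j) ∧
      σ.perm i = π.perm j)
    (h3 : ∀ i ∉ A, σ.col i = if σ.perm i = i then 1 else 0) :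
    ∀ a, SInt σ a ⊆ SInt π a := by
  classical
  have hA : ∀ j ∈ A, SInt σ (π.perm j) = SInt π (π.perm j) :=
    fun j hj => (agree_iff σ π j).1 (h1 j hj)
  by_cases hAall : ∀ j : Fin n, j ∈ A
  · intro a
    have heq := hA (π.perm.symm a) (hAall _)
    rw [π.perm.apply_symm_apply] at heq
    rw [heq]
  · push_neg at hAall
    obtain ⟨j0, hj0⟩ := hAall
    by_cases hsing : ∀ i, i ∉ A → i = j0
    · -- σ.perm = π.perm everywhere
      obtain ⟨j1, hj1A, hj1max, hj1perm⟩ := h2 j0 hj0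
      have hj1 : j1 = j0 := hsing j1 hj1A
      rw [hj1] at hj1perm
      have hperm : ∀ i, σ.perm i = π.perm i := by
        intro i; by_cases hi : i ∈ A
        · exact (h1 i hi).1
        · rw [hsing i hi]; exact hj1perm
      have hsymm : ∀ a, σ.perm.symm a = π.perm.symm a := by
        intro a
        apply σ.perm.injective
        rw [σ.perm.apply_symm_apply, hperm, π.perm.apply_symm_apply]
      intro a
      by_cases hπc : π.col a = -1
      · have hu : SInt π a = Finset.univ := by rw [SInt, if_pos hπc]
        rw [hu]; exact Finset.subset_univ _
      · have hσc : σ.col a ≠ -1 := by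
          intro hh
          have hfixσ : σ.perm a = a := col_fixed σ (by rw [hh]; decide)
          by_cases hi : a ∈ A
          · have hcols := (h1 a hi).2
            rw [hh] at hcols
            exact hπc hcols.symm
          · have hc3 := h3 a hi
            rw [hh, if_pos hfixσ] at hc3
            exact absurd hc3 (by decide)
        have heq : SInt σ a = SInt π a := by
          rw [SInt, SInt, if_neg hσc, if_neg hπc, hsymm]
        rw [heq]
    · -- main case
      push_neg at hsing
      obtain ⟨j1, hj1A, hj1ne⟩ := hsing
      set T : Finset (Fin n) := Finset.univ.filter (fun j => j ∉ A) with hTdef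
      have hmemT : ∀ j : Fin n, j ∈ T ↔ j ∉ A := by
        intro j; rw [hTdef, Finset.mem_filter]; simp
      have hj0T : j0 ∈ T := (hmemT j0).2 hj0
      have htwo : ∀ i ∈ T, ∃ y ∈ T, y ≠ i := by
        intro i hi
        rcases eq_or_ne i j0 with h | h
        · exact ⟨j1, (hmemT j1).2 hj1A, by rw [h]; exact hj1ne⟩
        · exact ⟨j0, hj0T, Ne.symm h⟩
      choose m hm1 hm2 hm3 using h2
      have hmne : ∀ i (hi : i ∉ A), m i hi ≠ i := by
        intro i hi hh
        obtain ⟨y, hyT, hyne⟩ := htwo i ((hmemT i).2 hi)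
        have h4 := hm2 i hi y ((hmemT y).1 hyT)
        rw [hh, cpos_self] at h4
        have h5 : cpos i y = 0 := Nat.le_zero.1 h4
        exact hyne (cpos_eq_zero.1 h5)
      have hminj : ∀ i (hi : i ∉ A) i' (hi' : i' ∉ A), m i hi = m i' hi' → i = i' := by
        intro i hi i' hi' heq
        by_contra hne
        have ha := hm2 i hi i' hi'
        have hb := hm2 i' hi' i hi
        rw [← heq] at hb
        exact inj_arith hne (hmne i hi) (by rw [heq]; exact hmne i' hi') ha hb
      set g : Fin n → Fin n := fun j => σ.perm.symm (π.perm j) with hgdef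
      set f : Fin n → Fin n := fun i => if h : i ∉ A then m i h else i with hfdef
      have hfT : ∀ i ∈ T, f i ∈ T := by
        intro i hi
        have hiA := (hmemT i).1 hi
        rw [hfdef]
        simp only [dif_pos hiA]
        exact (hmemT _).2 (hm1 i hiA)
      have himg : T.image f = T := by
        apply Finset.eq_of_subset_of_card_le
        · intro y hy
          obtain ⟨i, hi, rfl⟩ := Finset.mem_image.1 hy
          exact hfT i hi
        · rw [Finset.card_image_of_injOn]
          intro a haT b hbT hab
          have haA := (hmemT a).1 haT
          have hbA := (hmemT b).1 hbT
          rw [hfdef] at hab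
          simp only [dif_pos haA, dif_pos hbA] at hab
          exact hminj a haA b hbA hab
      have hpre : ∀ j ∈ T, ∃ i ∈ T, f i = j := by
        intro j hj
        have : j ∈ T.image f := by rw [himg]; exact hj
        obtain ⟨i, hi, hfi⟩ := Finset.mem_image.1 this
        exact ⟨i, hi, hfi⟩
      have hgspec : ∀ j ∈ T, g j ∈ T.erase j ∧
          (∀ z ∈ T.erase j, cpos j (g j) ≤ cpos j z) ∧ σ.perm (g j) = π.perm j := by
        intro j hj
        obtain ⟨i, hiT, hfi⟩ := hpre j hj
        have hiA := (hmemT i).1 hiT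
        have hfi' : m i hiA = j := by
          rw [hfdef] at hfi
          simpa only [dif_pos hiA] using hfi
        have hσi : σ.perm i = π.perm j := by rw [← hfi']; exact hm3 i hiA
        have hgi : g j = i := σ.perm.symm_apply_eq.2 hσi.symm
        have hij : i ≠ j := by
          intro hh
          exact hmne i hiA (by rw [hfi', hh])
        have hmax : ∀ z ∈ T, cpos i z ≤ cpos i j := by
          intro z hz
          have := hm2 i hiA z ((hmemT z).1 hz)
          rwa [hfi'] at this
        have hmins := max_to_min hij hmax
        exact ⟨by rw [hgi]; exact Finset.mem_erase.2 ⟨hij, hiT⟩,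
          by rw [hgi]; exact hmins, by rw [hgi]; exact hσi⟩
      have hgap : ∑ j ∈ T, cpos j (g j) = n :=
        gapsum ⟨j0, hj0T⟩ (fun j hj => (hgspec j hj).1) (fun j hj => (hgspec j hj).2.1)
      have hterm : ∀ j ∈ T,
          ((SInt π (π.perm j)).card : ℤ) - ((SInt σ (π.perm j)).card : ℤ)
          = (cpos j (g j) : ℤ) -
            (if SInt σ (π.perm j) ⊆ SInt π (π.perm j) then 0 else (n:ℤ)) := by
        intro j hj
        have hjA := (hmemT j).1 hj
        obtain ⟨hgE, hgmin, hgσ⟩ := hgspec j hj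
        rw [Finset.mem_erase] at hgE
        have hgne : g j ≠ j := hgE.1
        have hσcb : σ.col (π.perm j) ≠ -1 := by
          intro hh
          have hfixσ : σ.perm (π.perm j) = π.perm j := col_fixed σ (by rw [hh]; decide)
          by_cases hb : π.perm j ∈ A
          · have hcols := (h1 _ hb).2
            rw [hh] at hcols
            have hfixπ : π.perm (π.perm j) = π.perm j :=
              col_fixed π (by rw [← hcols]; decide)
            have hpjj : π.perm j = j := π.perm.injective hfixπ
            rw [hpjj] at hb
            exact hjA hb
          · have hc3 := h3 _ hb
            rw [hh, if_pos hfixσ] at hc3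
            exact absurd hc3 (by decide)
        have hσio : SInt σ (π.perm j) = cycIoc (g j) (π.perm j) := by
          rw [SInt, if_neg hσcb]
        have hc2 : (SInt σ (π.perm j)).card = cpos (g j) (π.perm j) := by
          rw [hσio, card_cycIoc]
        by_cases hcb : π.col (π.perm j) = -1
        · have hfixπ : π.perm (π.perm j) = π.perm j := col_fixed π (by rw [hcb]; decide)
          have hpjj : π.perm j = j := π.perm.injective hfixπ
          have hπu : SInt π (π.perm j) = Finset.univ := by rw [SInt, if_pos hcb]
          have hc1 : (SInt π (π.perm j)).card = n := by
            rw [hπu, Finset.card_univ, Fintype.card_fin]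
          have hsubj : SInt σ (π.perm j) ⊆ SInt π (π.perm j) := by
            rw [hπu]; exact Finset.subset_univ _
          rw [if_pos hsubj]
          have hcp2 : cpos (g j) (π.perm j) = cpos (g j) j := by rw [hpjj]
          have hanti := cpos_anti (Ne.symm hgne)
          omega
        · have hππ : SInt π (π.perm j) = cycIoc j (π.perm j) := by
            rw [SInt, if_neg hcb, π.perm.symm_apply_apply]
          have hc1 : (SInt π (π.perm j)).card = cpos j (π.perm j) := by
            rw [hππ, card_cycIoc]
          by_cases hss : SInt σ (π.perm j) ⊆ SInt π (π.perm j)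
          · rw [if_pos hss]
            have hle : cpos (g j) (π.perm j) ≤ cpos j (π.perm j) :=
              cycIoc_subset_same.1 (by rw [← hσio, ← hππ]; exact hss)
            have hsube := cpos_sub_of_le hle
            omega
          · rw [if_neg hss]
            have hgt : cpos j (π.perm j) < cpos (g j) (π.perm j) := by
              by_contra hc
              push_neg at hc
              exact hss (by rw [hσio, hππ]; exact cycIoc_subset_same.2 hc)
            have hsube := cpos_sub_of_gt hgt
            have hlt := cpos_lt (g j) (π.perm j)
            omega
      have hstep : (n:ℤ) = ∑ j ∈ T,
          (((SInt π (π.perm j)).card:ℤ) - ((SInt σ (π.perm j)).card:ℤ)) := by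
        rw [← hkey,
          ← Equiv.sum_comp π.perm (fun a => ((SInt π a).card:ℤ) - ((SInt σ a).card:ℤ))]
        refine (Finset.sum_subset (Finset.subset_univ T) (fun j _ hj => ?_)).symm
        have hjA : j ∈ A := by
          by_contra hc
          exact hj ((hmemT j).2 hc)
        show ((SInt π (π.perm j)).card:ℤ) - ((SInt σ (π.perm j)).card:ℤ) = 0
        rw [hA j hjA]
        ring
      have hsum2 : ∑ j ∈ T,
          (if SInt σ (π.perm j) ⊆ SInt π (π.perm j) then (0:ℤ) else n) = 0 := by
        rw [Finset.sum_congr rfl hterm, Finset.sum_sub_distrib] at hstep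
        have hgap' : ∑ j ∈ T, (cpos j (g j):ℤ) = n := by exact_mod_cast hgap
        omega
      have hallsub : ∀ j ∈ T, SInt σ (π.perm j) ⊆ SInt π (π.perm j) := by
        intro j hj
        by_contra hc
        have hnonneg : ∀ i ∈ T, (0:ℤ) ≤
            (if SInt σ (π.perm i) ⊆ SInt π (π.perm i) then (0:ℤ) else n) := by
          intro i _
          split
          · exact le_refl _
          · positivity
        have hz := (Finset.sum_eq_zero_iff_of_nonneg hnonneg).1 hsum2 j hj
        rw [if_neg hc] at hz
        omega
      intro a
      by_cases hja : π.perm.symm a ∈ A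
      · have heq := hA _ hja
        rw [π.perm.apply_symm_apply] at heq
        rw [heq]
      · have hjT : π.perm.symm a ∈ T := (hmemT _).2 hja
        have hsub := hallsub _ hjT
        rwa [π.perm.apply_symm_apply] at hsub

end BwdSec
/-- For positroids given by decorated permutations `σ`, `π` with
`rk(σ) = rk(π) - 1`, the necklaces satisfy `I^σ_i ⊆ I^π_i` for all `i` iff `σ = ρ_A(π)`
for some `A ⊆ [n]`. -/
theorem stmt6 (n : ℕ) (σ π : DecoratedPerm n) (hrk : drank σ + 1 = drank π) :
    (∀ i, neck σ i ⊆ neck π i) ↔ ∃ A : Finset (Fin n), IsCyclicShift π σ A := by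
  rcases Nat.eq_zero_or_pos n with hn0 | hn
  · subst hn0
    constructor
    · intro _
      exact ⟨∅, fun i _ => i.elim0, fun i _ => i.elim0, fun i _ => i.elim0⟩
    · intro _ i
      exact i.elim0
  · haveI : NeZero n := ⟨hn.ne'⟩
    have hkey : ∑ a : Fin n, (((SInt π a).card : ℤ) - ((SInt σ a).card : ℤ)) = (n : ℤ) := by
      rw [Finset.sum_sub_distrib, sum_card_SInt_eq σ, sum_card_SInt_eq π, ← hrk]
      push_cast
      ring
    constructor
    · intro hneck
      have hsub : ∀ a, SInt σ a ⊆ SInt π a := by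
        intro a i hi
        exact (mem_neck_iff π).1 (hneck i ((mem_neck_iff σ).2 hi))
      exact forward_dir hn σ π hkey hsub
    · rintro ⟨A, h1, h2, h3⟩
      have hsub := backward_dir hn σ π hkey A h1 h2 h3
      intro i a ha
      exact (mem_neck_iff π).2 (hsub a ((mem_neck_iff σ).1 ha))
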